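/- For real numbers x, y with 0 ≤ x, y ≤ 1 and a positive real n, one has (1 − xy)^n ≤ 1 − x + e^{−ny}. -/

import Mathlib

open Real

theorem stmt_12 (x y n : ℝ) (hx0 : 0 ≤ x) (hx1 : x ≤ 1) (hy0 : 0 ≤ y) (hy1 : y ≤ 1)
    (hn : 0 < n) :
    (1 - x * y) ^ n ≤ 1 - x + Real.exp (-n * y) := by
  have hxy : 0 ≤ x * y := mul_nonneg hx0 hy0
  have hxy1 : x * y ≤ 1 := by nlinarith
  have h1 : (1 - x * y) ^ n ≤ Real.exp (-(x * y)) ^ n := by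
    apply Real.rpow_le_rpow (by linarith) ?_ hn.le
    have := Real.add_one_le_exp (-(x * y))
    linarith
  have h2 : Real.exp (-(x * y)) ^ n = Real.exp (n * (-(x * y))) := by
    rw [Real.rpow_def_of_pos (Real.exp_pos _), Real.log_exp]
    ring_nf
  have h3 : Real.exp (n * (-(x * y))) ≤ (1 - x) * Real.exp 0 + x * Real.exp (-n * y) := by
    have := convexOn_exp.2 (Set.mem_univ (0 : ℝ)) (Set.mem_univ (-n * y))
      (by linarith : (0:ℝ) ≤ 1 - x) hx0 (by ring)
    simp only [smul_eq_mul] at this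
    convert this using 2
    · rfl
    · ring
  have h4 : x * Real.exp (-n * y) ≤ Real.exp (-n * y) := by
    nlinarith [Real.exp_pos (-n * y)]
  rw [Real.exp_zero] at h3
  linarith [h1, h2 ▸ h1]
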